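/- Consider labeled chip-firing on ℤ with 2m chips (m ≥ 1), bijectively labeled by {−m,…,−1,1,…,m}, all initially at site 0, and any complete firing sequence. Then for all integers x, y with 0 ≤ x ≤ m−1 and 0 ≤ y ≤ m−1: (1) firing move (x,y) occurs with exactly 2 chips present at site x−y; and (2) firing move (x,y) occurs after firing move (x+1,y) whenever firing move (x+1,y) exists, and firing move (x,y) occurs after firing move (x,y+1) whenever firing move (x,y+1) exists. -/

import Mathlib

/-- A labeled chip-firing move at site `i`: two distinct chips `a, b` at a common
site `i` with `label a < label b` are chosen; `a` moves to `i - 1` and `b` moves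
to `i + 1`; all other chips stay put. -/
def LMove {ι : Type} (label : ι → ℤ) (c c' : ι → ℤ) (i : ℤ) : Prop :=
  ∃ a b : ι, a ≠ b ∧ label a < label b ∧ c a = i ∧ c b = i ∧
    c' a = i - 1 ∧ c' b = i + 1 ∧ ∀ x : ι, x ≠ a → x ≠ b → c' x = c x

/-- `u` is the time of the `j`-th-from-last firing at site `s` in a firing
sequence of length `T` whose fired sites are recorded by `site`. -/
def JthLastFiring (site : ℕ → ℤ) (T : ℕ) (s : ℤ) (j : ℕ) (u : ℕ) : Prop :=
  u < T ∧ site u = s ∧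
    ((Finset.Ico (u + 1) T).filter (fun v => site v = s)).card = j - 1

/-- The chips: one chip for each label in `{-m, …, -1, 1, …, m}`. -/
abbrev Chips (m : ℕ) := {k : ℤ // k ∈ (Finset.Icc (-(m : ℤ)) m).erase 0}

namespace CFAux

/-- triangular numbers -/
def G : ℕ → ℕ
  | 0 => 0
  | n+1 => G n + (n+1)

lemma G_mono : Monotone G := by
  intro a b hab
  induction b with
  | zero => simpa using Nat.le_zero.mp hab ▸ le_refl _
  | succ n ih =>
    rcases Nat.lt_or_ge a (n+1) with h | h
    · have := ih (by omega)
      show G a ≤ G n + (n+1)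
      omega
    · have : a = n + 1 := by omega
      subst this; rfl

lemma G_ge (n : ℕ) : n ≤ G n := by
  induction n with
  | zero => simp [G]
  | succ k ih => show _ ≤ G k + (k+1); omega

def gz (k : ℤ) : ℤ := G k.toNat

lemma gz_natCast (n : ℕ) : gz (n : ℤ) = (G n : ℤ) := by simp [gz]

lemma gz_nonneg (k : ℤ) : 0 ≤ gz k := Int.natCast_nonneg _

lemma gz_of_nonpos {k : ℤ} (h : k ≤ 0) : gz k = 0 := by
  unfold gz
  rw [Int.toNat_of_nonpos h]
  rfl

lemma gz_succ {k : ℤ} (h : 1 ≤ k) : gz k = gz (k-1) + k := by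
  obtain ⟨n, rfl⟩ : ∃ n : ℕ, k = (n : ℤ) + 1 := ⟨(k-1).toNat, by omega⟩
  have h2 : ((n:ℤ) + 1 - 1) = (n:ℤ) := by ring
  rw [h2]
  have h1 : ((n:ℤ)+1) = ((n+1 : ℕ) : ℤ) := by push_cast; ring
  rw [h1, gz_natCast, gz_natCast]
  show ((G n + (n+1) : ℕ) : ℤ) = _
  push_cast; ring

lemma gz_mono : Monotone gz := by
  intro a b hab
  unfold gz
  exact_mod_cast Nat.cast_le.mpr (G_mono (Int.toNat_le_toNat hab))

lemma gz_pos {k : ℤ} (h : 1 ≤ k) : 1 ≤ gz k := by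
  rw [gz_succ h]
  have := gz_nonneg (k-1)
  omega

lemma gz_ge {k : ℤ} : k ≤ gz k := by
  rcases le_or_gt k 0 with h | h
  · rw [gz_of_nonpos h]; omega
  · unfold gz
    have : k = (k.toNat : ℤ) := by omega
    rw [this]
    exact_mod_cast G_ge k.toNat

lemma gz_eq_zero {k : ℤ} (h : gz k = 0) : k ≤ 0 := by
  by_contra hk
  have := gz_pos (k := k) (by omega)
  omega

lemma gz_one : gz 1 = 1 := by
  have : gz 1 = gz 0 + 1 := gz_succ (by norm_num)
  rw [this, gz_of_nonpos le_rfl]; ring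



structure Sys (m T : ℕ) (cfg : ℕ → Chips m → ℤ) (site : ℕ → ℤ) : Prop where
  hm : 1 ≤ m
  hinit : ∀ a, cfg 0 a = 0
  hstep : ∀ u < T, LMove (fun a => a.1) (cfg u) (cfg (u + 1)) (site u)
  hcomplete : Function.Injective (cfg T)

variable {m T : ℕ} {cfg : ℕ → Chips m → ℤ} {site : ℕ → ℤ}

/-- number of chips at site `s` at time `u` -/
noncomputable def Nc (cfg : ℕ → Chips m → ℤ) (u : ℕ) (s : ℤ) : ℕ :=
  (Finset.univ.filter (fun a : Chips m => cfg u a = s)).card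

/-- number of firings at site `t` before time `u` -/
def bF (site : ℕ → ℤ) (u : ℕ) (t : ℤ) : ℕ :=
  ((Finset.range u).filter (fun v => site v = t)).card

/-- number of firings at site `t` at times in `[u, T)` -/
def rF (site : ℕ → ℤ) (T u : ℕ) (t : ℤ) : ℕ :=
  ((Finset.Ico u T).filter (fun v => site v = t)).card

lemma card_chips : (Finset.univ : Finset (Chips m)).card = 2 * m := by
  rw [Finset.card_univ]
  rw [Fintype.card_coe]
  rw [Finset.card_erase_of_mem (by simp)]
  rw [Int.card_Icc]
  omega

lemma step_sum (S : Sys m T cfg site) (φ : ℤ → ℤ) {u : ℕ} (hu : u < T) :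
    ∑ x : Chips m, φ (cfg (u+1) x)
      = (∑ x : Chips m, φ (cfg u x)) + φ (site u - 1) + φ (site u + 1) - 2 * φ (site u) := by
  obtain ⟨a, b, hab, _, ha, hb, ha', hb', hoth⟩ := S.hstep u hu
  have hsub : ({a, b} : Finset (Chips m)) ⊆ Finset.univ := Finset.subset_univ _
  have key : ∀ (c : Chips m → ℤ),
      ∑ x : Chips m, φ (c x)
        = (∑ x ∈ Finset.univ \ {a, b}, φ (c x)) + (φ (c a) + φ (c b)) := by
    intro c
    rw [← Finset.sum_sdiff hsub, Finset.sum_pair hab]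
  rw [key (cfg (u+1)), key (cfg u)]
  have heq : ∀ x ∈ Finset.univ \ ({a, b} : Finset (Chips m)),
      φ (cfg (u+1) x) = φ (cfg u x) := by
    intro x hx
    simp only [Finset.mem_sdiff, Finset.mem_insert, Finset.mem_singleton] at hx
    rw [hoth x (fun h => hx.2 (Or.inl h)) (fun h => hx.2 (Or.inr h))]
  rw [Finset.sum_congr rfl heq, ha, hb, ha', hb']
  ring

lemma Nc_sum (u : ℕ) (s : ℤ) :
    (Nc cfg u s : ℤ) = ∑ x : Chips m, (if cfg u x = s then (1:ℤ) else 0) := by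
  unfold Nc
  rw [Finset.card_filter]
  push_cast
  exact Finset.sum_congr rfl (fun x _ => rfl)

lemma step_Nc (S : Sys m T cfg site) {u : ℕ} (hu : u < T) (s : ℤ) :
    (Nc cfg (u+1) s : ℤ) = (Nc cfg u s : ℤ)
      + (if site u - 1 = s then 1 else 0) + (if site u + 1 = s then 1 else 0)
      - 2 * (if site u = s then 1 else 0) := by
  rw [Nc_sum, Nc_sum]
  exact step_sum S (fun p => if p = s then (1:ℤ) else 0) hu

lemma step_bF (u : ℕ) (t : ℤ) :
    (bF site (u+1) t : ℤ) = (bF site u t : ℤ) + (if site u = t then 1 else 0) := by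
  unfold bF
  rw [Finset.range_add_one, Finset.filter_insert]
  split_ifs with h
  · rw [Finset.card_insert_of_notMem (by simp)]
    push_cast; ring
  · ring

lemma bF_add_rF {u : ℕ} (hu : u ≤ T) (t : ℤ) :
    bF site T t = bF site u t + rF site T u t := by
  unfold bF rF
  simp only [Finset.range_eq_Ico]
  rw [← Finset.Ico_union_Ico_eq_Ico (Nat.zero_le u) hu, Finset.filter_union]
  exact Finset.card_union_of_disjoint
    (Finset.disjoint_filter_filter (Finset.Ico_disjoint_Ico_consecutive 0 u T))

lemma rF_succ {u : ℕ} (hu : u < T) (t : ℤ) :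
    (rF site T u t : ℤ) = (rF site T (u+1) t : ℤ) + (if site u = t then 1 else 0) := by
  have h1 := bF_add_rF (site := site) (Nat.le_of_lt hu) t
  have h2 := bF_add_rF (site := site) (show u + 1 ≤ T by omega) t
  have h3 := step_bF (site := site) u t
  split_ifs at h3 ⊢ <;> push_cast at * <;> omega

lemma rF_antitone {u v : ℕ} (huv : u ≤ v) (t : ℤ) :
    rF site T v t ≤ rF site T u t := by
  unfold rF
  exact Finset.card_le_card
    (Finset.filter_subset_filter _ (Finset.Ico_subset_Ico huv le_rfl))

lemma two_at (S : Sys m T cfg site) {u : ℕ} (hu : u < T) : 2 ≤ Nc cfg u (site u) := by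
  obtain ⟨a, b, hab, _, ha, hb, _, _, _⟩ := S.hstep u hu
  have hsub : ({a, b} : Finset (Chips m)) ⊆
      Finset.univ.filter (fun x : Chips m => cfg u x = site u) := by
    intro x hx
    simp only [Finset.mem_insert, Finset.mem_singleton] at hx
    rcases hx with rfl | rfl <;> simp [ha, hb]
  calc 2 = ({a, b} : Finset (Chips m)).card := (Finset.card_pair hab).symm
  _ ≤ _ := Finset.card_le_card hsub


/-- past-form Laplacian identity -/
lemma ID2 (S : Sys m T cfg site) : ∀ u ≤ T, ∀ s : ℤ,
    (Nc cfg u s : ℤ) = (if s = 0 then (2*m : ℤ) else 0)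
      + (bF site u (s-1) : ℤ) + (bF site u (s+1) : ℤ) - 2 * (bF site u s : ℤ) := by
  intro u
  induction u with
  | zero =>
    intro _ s
    have hb : ∀ t : ℤ, bF site 0 t = 0 := by intro t; simp [bF]
    have hN : Nc cfg 0 s = if s = 0 then 2*m else 0 := by
      unfold Nc
      split_ifs with h
      · subst h
        rw [show Finset.univ.filter (fun a : Chips m => cfg 0 a = 0) = Finset.univ from
          Finset.filter_eq_self.mpr (fun a _ => S.hinit a)]
        exact card_chips
      · rw [Finset.card_eq_zero.mpr]
        apply Finset.filter_eq_empty_iff.mpr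
        intro a _
        rw [S.hinit a]
        exact fun hh => h hh.symm
    rw [hN, hb, hb, hb]
    split_ifs <;> push_cast <;> ring
  | succ u ih =>
    intro hu s
    have hu' : u < T := by omega
    have h1 := step_Nc S hu' s
    have h2 := step_bF (site := site) u (s-1)
    have h3 := step_bF (site := site) u (s+1)
    have h4 := step_bF (site := site) u s
    have h5 := ih (by omega) s
    split_ifs at h1 h2 h3 h4 h5 ⊢ <;> omega

/-- future-form identity -/
lemma ID1 (S : Sys m T cfg site) {u : ℕ} (hu : u ≤ T) (s : ℤ) :
    (Nc cfg u s : ℤ) = (Nc cfg T s : ℤ) + 2 * (rF site T u s : ℤ)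
      - (rF site T u (s-1) : ℤ) - (rF site T u (s+1) : ℤ) := by
  have h1 := ID2 S u hu s
  have h2 := ID2 S T le_rfl s
  have e1 := bF_add_rF (site := site) hu (s-1)
  have e2 := bF_add_rF (site := site) hu (s+1)
  have e3 := bF_add_rF (site := site) hu s
  split_ifs at h1 h2 <;> push_cast at * <;> omega

lemma sum_zero (S : Sys m T cfg site) : ∀ u ≤ T, ∑ x : Chips m, cfg u x = 0 := by
  intro u
  induction u with
  | zero =>
    intro _
    rw [Finset.sum_congr rfl (fun x _ => S.hinit x)]
    simp
  | succ u ih =>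
    intro hu
    have h := step_sum S id (show u < T by omega)
    simp only [id] at h
    rw [h, ih (by omega)]
    ring

lemma max_kink (i t : ℤ) :
    max (i-1-t) 0 + max (i+1-t) 0 - 2 * max (i-t) 0 = if i = t then 1 else 0 := by
  split_ifs <;> omega

lemma max_kink' (i t : ℤ) :
    max (t-(i-1)) 0 + max (t-(i+1)) 0 - 2 * max (t-i) 0 = if i = t then 1 else 0 := by
  split_ifs <;> omega

lemma Wr (S : Sys m T cfg site) {t : ℤ} (ht : 0 ≤ t) :
    ∀ u ≤ T, ∑ x : Chips m, max (cfg u x - t) 0 = (bF site u t : ℤ) := by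
  intro u
  induction u with
  | zero =>
    intro _
    have : ∀ x : Chips m, max (cfg 0 x - t) 0 = 0 := by
      intro x; rw [S.hinit x]; omega
    rw [Finset.sum_congr rfl (fun x _ => this x)]
    simp [bF]
  | succ u ih =>
    intro hu
    have h := step_sum S (fun p => max (p - t) 0) (show u < T by omega)
    rw [h, ih (by omega), step_bF (site := site) u t]
    have := max_kink (site u) t
    split_ifs at this ⊢ <;> omega

lemma Wl (S : Sys m T cfg site) {t : ℤ} (ht : t ≤ 0) :
    ∀ u ≤ T, ∑ x : Chips m, max (t - cfg u x) 0 = (bF site u t : ℤ) := by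
  intro u
  induction u with
  | zero =>
    intro _
    have : ∀ x : Chips m, max (t - cfg 0 x) 0 = 0 := by
      intro x; rw [S.hinit x]; omega
    rw [Finset.sum_congr rfl (fun x _ => this x)]
    simp [bF]
  | succ u ih =>
    intro hu
    have h := step_sum S (fun p => max (t - p) 0) (show u < T by omega)
    rw [h, ih (by omega), step_bF (site := site) u t]
    have := max_kink' (site u) t
    split_ifs at this ⊢ <;> omega


lemma cap_lap (hm : 1 ≤ m) (i : ℤ) :
    (if i = 0 then (2*m : ℤ) else 0) + gz ((m:ℤ) - |i-1|) + gz ((m:ℤ) - |i+1|)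
      ≤ 2 * gz ((m:ℤ) - |i|) + 1 := by
  rcases lt_trichotomy i 0 with hi | hi | hi
  · -- i ≤ -1
    rw [if_neg (by omega), abs_of_nonpos (by omega : i - 1 ≤ 0),
      abs_of_nonpos (by omega : i + 1 ≤ 0), abs_of_nonpos (by omega : i ≤ 0)]
    rcases le_or_gt 1 ((m:ℤ) + i) with h | h
    · have e1 : gz ((m:ℤ) - -(i-1)) = gz ((m:ℤ) + i - 1) := by ring_nf
      have e2 : gz ((m:ℤ) - -(i+1)) = gz ((m:ℤ) + i + 1) := by ring_nf
      have e3 : gz ((m:ℤ) - -i) = gz ((m:ℤ) + i) := by ring_nf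
      rw [e1, e2, e3]
      have s1 : gz ((m:ℤ) + i + 1) = gz ((m:ℤ) + i) + ((m:ℤ) + i + 1) := by
        have := gz_succ (k := (m:ℤ) + i + 1) (by omega)
        simpa using this
      have s2 : gz ((m:ℤ) + i) = gz ((m:ℤ) + i - 1) + ((m:ℤ) + i) := gz_succ (by omega)
      omega
    · -- m + i ≤ 0
      have e1 : gz ((m:ℤ) - -(i-1)) = 0 := gz_of_nonpos (by omega)
      have e2 : gz ((m:ℤ) - -(i+1)) ≤ gz 1 := gz_mono (by omega)
      have e3 : 0 ≤ gz ((m:ℤ) - -i) := gz_nonneg _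
      have e5 := gz_one
      omega
  · -- i = 0
    subst hi
    rw [if_pos rfl]
    simp only [abs_of_nonpos, abs_of_nonneg, zero_sub, zero_add, abs_neg, abs_one, sub_zero,
      abs_zero]
    have s1 : gz (m:ℤ) = gz ((m:ℤ) - 1) + m := gz_succ (by exact_mod_cast hm)
    omega
  · -- i ≥ 1
    rw [if_neg (by omega), abs_of_nonneg (by omega : (0:ℤ) ≤ i - 1),
      abs_of_nonneg (by omega : (0:ℤ) ≤ i + 1), abs_of_nonneg (by omega : (0:ℤ) ≤ i)]
    rcases le_or_gt 1 ((m:ℤ) - i) with h | h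
    · have e1 : gz ((m:ℤ) - (i-1)) = gz ((m:ℤ) - i) + ((m:ℤ) - i + 1) := by
        have := gz_succ (k := (m:ℤ) - (i-1)) (by omega)
        rw [this]; ring_nf
      have e2 : gz ((m:ℤ) - i) = gz ((m:ℤ) - (i+1)) + ((m:ℤ) - i) := by
        have := gz_succ (k := (m:ℤ) - i) (by omega)
        rw [this]; ring_nf
      omega
    · have e1 : gz ((m:ℤ) - (i+1)) = 0 := gz_of_nonpos (by omega)
      have e2 : gz ((m:ℤ) - (i-1)) ≤ gz ((m:ℤ) - i + 1) := gz_mono (by omega)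
      have e3 : 0 ≤ gz ((m:ℤ) - i) := gz_nonneg _
      rcases le_or_gt ((m:ℤ) - i + 1) 0 with h2 | h2
      · have := gz_of_nonpos h2; omega
      · have h6 := gz_succ (k := (m:ℤ) - i + 1) (by omega)
        rw [show (m:ℤ) - i + 1 - 1 = (m:ℤ) - i by ring] at h6
        omega

/-- odometer cap -/
lemma cap (S : Sys m T cfg site) : ∀ u ≤ T, ∀ t : ℤ, (bF site u t : ℤ) ≤ gz ((m:ℤ) - |t|) := by
  intro u
  induction u with
  | zero => intro _ t; simp [bF]; exact gz_nonneg _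
  | succ u ih =>
    intro hu t
    have hu' : u < T := by omega
    have hb := step_bF (site := site) u t
    by_cases hit : site u = t
    · subst hit
      rw [if_pos rfl] at hb
      -- suppose bF site u (site u) = gz (m - |site u|), derive contradiction
      rcases lt_or_ge ((bF site u (site u) : ℤ)) (gz ((m:ℤ) - |site u|)) with h | h
      · omega
      · exfalso
        have heq : (bF site u (site u) : ℤ) = gz ((m:ℤ) - |site u|) :=
          le_antisymm (ih (by omega) _) h
        have h2 := two_at S hu'
        have h3 := ID2 S u (by omega) (site u)
        have c1 := ih (by omega) (site u - 1)
        have c2 := ih (by omega) (site u + 1)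
        have clap := cap_lap (m := m) S.hm (site u)
        have e1 : |site u - 1| = |(site u) - 1| := rfl
        split_ifs at h3 clap <;> omega
    · rw [if_neg hit] at hb
      have := ih (by omega) t
      omega

/-- final positions lie in [-m, m] -/
lemma final_bound (S : Sys m T cfg site) (x : Chips m) :
    -(m:ℤ) ≤ cfg T x ∧ cfg T x ≤ m := by
  constructor
  · have hW := Wl S (t := -(m:ℤ)) (by omega) T le_rfl
    have hcap := cap S T le_rfl (-(m:ℤ))
    have hz : gz ((m:ℤ) - |(-(m:ℤ))|) = 0 := by
      rw [abs_neg, abs_of_nonneg (by positivity)]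
      exact gz_of_nonpos (by omega)
    have hsum : ∑ y : Chips m, max (-(m:ℤ) - cfg T y) 0 = 0 := by omega
    have hterm := (Finset.sum_eq_zero_iff_of_nonneg
      (fun y _ => le_max_right (-(m:ℤ) - cfg T y) 0)).mp hsum x (Finset.mem_univ x)
    omega
  · have hW := Wr S (t := (m:ℤ)) (by positivity) T le_rfl
    have hcap := cap S T le_rfl (m:ℤ)
    have hz : gz ((m:ℤ) - |(m:ℤ)|) = 0 := by
      rw [abs_of_nonneg (by positivity)]
      exact gz_of_nonpos (by omega)
    have hsum : ∑ y : Chips m, max (cfg T y - m) 0 = 0 := by omega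
    have hterm := (Finset.sum_eq_zero_iff_of_nonneg
      (fun y _ => le_max_right (cfg T y - m) 0)).mp hsum x (Finset.mem_univ x)
    omega


lemma sum_Icc_pos (n : ℕ) : ∑ v ∈ Finset.Icc (1:ℤ) (n:ℤ), v = gz n := by
  induction n with
  | zero => simp [gz_of_nonpos]
  | succ n ih =>
    have hins : Finset.Icc (1:ℤ) ((n:ℤ)+1) = insert ((n:ℤ)+1) (Finset.Icc (1:ℤ) n) := by
      ext v; simp only [Finset.mem_Icc, Finset.mem_insert]; omega
    have hnm : ((n:ℤ)+1) ∉ Finset.Icc (1:ℤ) (n:ℤ) := by simp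
    rw [show ((n+1 : ℕ) : ℤ) = (n:ℤ)+1 by push_cast; ring, hins, Finset.sum_insert hnm, ih]
    have hgs := gz_succ (k := (n:ℤ)+1) (by omega)
    rw [show (n:ℤ)+1-1 = (n:ℤ) by ring] at hgs
    rw [hgs]
    ring

lemma sum_Icc_neg (n : ℕ) : ∑ v ∈ Finset.Icc (-(n:ℤ)) (-1), v = -gz n := by
  have himg : Finset.Icc (-(n:ℤ)) (-1) = (Finset.Icc (1:ℤ) (n:ℤ)).image (fun v => -v) := by
    ext v
    simp only [Finset.mem_Icc, Finset.mem_image]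
    constructor
    · intro h; exact ⟨-v, by omega, by ring⟩
    · rintro ⟨w, hw, rfl⟩; omega
  rw [himg, Finset.sum_image (by intro x _ y _ h; exact neg_inj.mp h)]
  rw [Finset.sum_neg_distrib, sum_Icc_pos]

lemma shape (S : Sys m T cfg site) :
    Finset.image (fun x => cfg T x) Finset.univ = (Finset.Icc (-(m:ℤ)) (m:ℤ)).erase 0 := by
  classical
  set f := fun x : Chips m => cfg T x with hf
  have hinj : ∀ x ∈ (Finset.univ : Finset (Chips m)), ∀ y ∈ Finset.univ, f x = f y → x = y :=
    fun x _ y _ h => S.hcomplete h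
  set posP := Finset.univ.filter (fun x : Chips m => 0 < f x) with hposP
  set negP := Finset.univ.filter (fun x : Chips m => f x < 0) with hnegP
  set zP := Finset.univ.filter (fun x : Chips m => f x = 0) with hzP
  have hsubP : posP.image f ⊆ Finset.Icc (1:ℤ) m := by
    intro v hv
    obtain ⟨x, hx, rfl⟩ := Finset.mem_image.mp hv
    have := (final_bound S x).2
    have hfx : f x = cfg T x := rfl
    simp only [hposP, Finset.mem_filter] at hx
    simp only [Finset.mem_Icc]
    omega
  have hsubN : negP.image f ⊆ Finset.Icc (-(m:ℤ)) (-1) := by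
    intro v hv
    obtain ⟨x, hx, rfl⟩ := Finset.mem_image.mp hv
    have := (final_bound S x).1
    have hfx : f x = cfg T x := rfl
    simp only [hnegP, Finset.mem_filter] at hx
    simp only [Finset.mem_Icc]
    omega
  have hcardIccP : (Finset.Icc (1:ℤ) (m:ℤ)).card = m := by
    rw [Int.card_Icc]; omega
  have hcardIccN : (Finset.Icc (-(m:ℤ)) (-1)).card = m := by
    rw [Int.card_Icc]; omega
  have hcardP : (posP.image f).card = posP.card :=
    Finset.card_image_of_injOn (fun x hx y hy h => hinj x (Finset.mem_univ x) y (Finset.mem_univ y) h)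
  have hcardN : (negP.image f).card = negP.card :=
    Finset.card_image_of_injOn (fun x hx y hy h => hinj x (Finset.mem_univ x) y (Finset.mem_univ y) h)
  have hP_le : posP.card ≤ m := by
    rw [← hcardP]
    calc (posP.image f).card ≤ (Finset.Icc (1:ℤ) (m:ℤ)).card := Finset.card_le_card hsubP
    _ = m := hcardIccP
  have hN_le : negP.card ≤ m := by
    rw [← hcardN]
    calc (negP.image f).card ≤ (Finset.Icc (-(m:ℤ)) (-1)).card := Finset.card_le_card hsubN
    _ = m := hcardIccN
  have hZ_le : zP.card ≤ 1 := by
    apply Finset.card_le_one.mpr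
    intro a ha b hb
    simp only [hzP, Finset.mem_filter] at ha hb
    exact hinj a (Finset.mem_univ a) b (Finset.mem_univ b) (by rw [ha.2, hb.2])
  have htotal : posP.card + (zP.card + negP.card) = 2 * m := by
    have h1 := Finset.card_filter_add_card_filter_not
      (s := (Finset.univ : Finset (Chips m))) (p := fun x => 0 < f x)
    have h2 : (Finset.univ.filter (fun x : Chips m => ¬ 0 < f x)).card
        = zP.card + negP.card := by
      have hsplit := Finset.card_filter_add_card_filter_not
        (s := Finset.univ.filter (fun x : Chips m => ¬ 0 < f x)) (p := fun x => f x = 0)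
      have e1 : (Finset.univ.filter (fun x : Chips m => ¬ 0 < f x)).filter
          (fun x => f x = 0) = zP := by
        rw [Finset.filter_filter, hzP]
        apply Finset.filter_congr
        intro x _
        constructor
        · exact fun h => h.2
        · intro h; exact ⟨by omega, h⟩
      have e2 : (Finset.univ.filter (fun x : Chips m => ¬ 0 < f x)).filter
          (fun x => ¬ f x = 0) = negP := by
        rw [Finset.filter_filter, hnegP]
        apply Finset.filter_congr
        intro x _
        constructor
        · intro h; omega
        · intro h; exact ⟨by omega, by omega⟩
      rw [e1, e2] at hsplit
      omega
    rw [h2] at h1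
    rw [card_chips] at h1
    exact h1
  -- sums
  have hsum_univ : ∑ x : Chips m, f x = 0 := sum_zero S T le_rfl
  have hsplit1 : ∑ x : Chips m, f x
      = (∑ x ∈ posP, f x) + ((∑ x ∈ zP, f x) + (∑ x ∈ negP, f x)) := by
    rw [← Finset.sum_filter_add_sum_filter_not Finset.univ (fun x => 0 < f x)]
    congr 1
    rw [← Finset.sum_filter_add_sum_filter_not
      (Finset.univ.filter (fun x : Chips m => ¬ 0 < f x)) (fun x => f x = 0)]
    congr 1
    · apply Finset.sum_congr _ (fun _ _ => rfl)
      rw [Finset.filter_filter, hzP]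
      apply Finset.filter_congr
      intro x _
      constructor
      · exact fun h => h.2
      · intro h; exact ⟨by omega, h⟩
    · apply Finset.sum_congr _ (fun _ _ => rfl)
      rw [Finset.filter_filter, hnegP]
      apply Finset.filter_congr
      intro x _
      constructor
      · intro h; omega
      · intro h; exact ⟨by omega, by omega⟩
  have hzsum : ∑ x ∈ zP, f x = 0 := by
    apply Finset.sum_eq_zero
    intro x hx
    simp only [hzP, Finset.mem_filter] at hx
    exact hx.2
  have hsumP : ∑ x ∈ posP, f x = ∑ v ∈ posP.image f, v := by
    rw [Finset.sum_image (fun x hx y hy h => hinj x (Finset.mem_univ x) y (Finset.mem_univ y) h)]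
  have hsumN : ∑ x ∈ negP, f x = ∑ v ∈ negP.image f, v := by
    rw [Finset.sum_image (fun x hx y hy h => hinj x (Finset.mem_univ x) y (Finset.mem_univ y) h)]
  -- exclusion of the zero chip
  have hz0 : zP.card = 0 := by
    by_contra hz
    have hz1 : zP.card = 1 := by omega
    -- then posP.card + negP.card = 2m - 1, so one of them is m
    rcases (by omega : posP.card = m ∧ negP.card = m - 1 ∨ negP.card = m ∧ posP.card = m - 1)
      with ⟨hPm, hNm⟩ | ⟨hNm, hPm⟩
    · -- positives full, negatives m-1
      have himgP : posP.image f = Finset.Icc (1:ℤ) m :=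
        Finset.eq_of_subset_of_card_le hsubP (by rw [hcardIccP, hcardP, hPm])
      have hsum1 : ∑ v ∈ posP.image f, v = gz m := by rw [himgP]; exact sum_Icc_pos m
      -- negatives: proper subset of Icc (-m) (-1)
      have hlt : (negP.image f).card < (Finset.Icc (-(m:ℤ)) (-1)).card := by
        rw [hcardIccN, hcardN, hNm]; omega
      have hex : ∃ w ∈ Finset.Icc (-(m:ℤ)) (-1), w ∉ negP.image f := by
        by_contra hc
        push_neg at hc
        have : (Finset.Icc (-(m:ℤ)) (-1)).card ≤ (negP.image f).card :=
          Finset.card_le_card (fun w hw => hc w hw)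
        omega
      obtain ⟨w, hw, hwn⟩ := hex
      have hsum2 : ∑ v ∈ negP.image f, (-v) < ∑ v ∈ Finset.Icc (-(m:ℤ)) (-1), (-v) := by
        apply Finset.sum_lt_sum_of_subset hsubN hw hwn
        · simp only [Finset.mem_Icc] at hw; omega
        · intro j hj _
          simp only [Finset.mem_Icc] at hj; omega
      have hsum3 : ∑ v ∈ Finset.Icc (-(m:ℤ)) (-1), (-v) = gz (m:ℤ) := by
        rw [Finset.sum_neg_distrib, sum_Icc_neg]; ring
      have hsum4 : ∑ v ∈ negP.image f, (-v) = - ∑ v ∈ negP.image f, v :=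
        Finset.sum_neg_distrib _
      linarith
    · -- mirror
      have himgN : negP.image f = Finset.Icc (-(m:ℤ)) (-1) :=
        Finset.eq_of_subset_of_card_le hsubN (by rw [hcardIccN, hcardN, hNm])
      have hsum1 : ∑ v ∈ negP.image f, v = -gz m := by rw [himgN]; exact sum_Icc_neg m
      have hlt : (posP.image f).card < (Finset.Icc (1:ℤ) (m:ℤ)).card := by
        rw [hcardIccP, hcardP, hPm]; omega
      have hex : ∃ w ∈ Finset.Icc (1:ℤ) (m:ℤ), w ∉ posP.image f := by
        by_contra hc
        push_neg at hc
        have : (Finset.Icc (1:ℤ) (m:ℤ)).card ≤ (posP.image f).card :=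
          Finset.card_le_card (fun w hw => hc w hw)
        omega
      obtain ⟨w, hw, hwn⟩ := hex
      have hsum2 : ∑ v ∈ posP.image f, v < ∑ v ∈ Finset.Icc (1:ℤ) (m:ℤ), v := by
        apply Finset.sum_lt_sum_of_subset hsubP hw hwn
        · simp only [Finset.mem_Icc] at hw; omega
        · intro j hj _
          simp only [Finset.mem_Icc] at hj; omega
      have hsum3 := sum_Icc_pos m
      linarith
  -- so posP.card = m and negP.card = m
  have hPm : posP.card = m := by omega
  have hNm : negP.card = m := by omega
  have himgP : posP.image f = Finset.Icc (1:ℤ) m :=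
    Finset.eq_of_subset_of_card_le hsubP (by rw [hcardIccP, hcardP, hPm])
  have himgN : negP.image f = Finset.Icc (-(m:ℤ)) (-1) :=
    Finset.eq_of_subset_of_card_le hsubN (by rw [hcardIccN, hcardN, hNm])
  have huniv : (Finset.univ : Finset (Chips m)) = posP ∪ negP := by
    ext x
    simp only [hposP, hnegP, Finset.mem_union, Finset.mem_filter, Finset.mem_univ, true_and]
    refine iff_of_true trivial ?_
    rcases lt_trichotomy (f x) 0 with h | h | h
    · exact Or.inr h
    · exfalso
      have hxz : x ∈ zP := by simp [hzP, h]
      rw [Finset.card_eq_zero] at hz0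
      rw [hz0] at hxz
      exact absurd hxz (Finset.notMem_empty x)
    · exact Or.inl h
  rw [huniv, Finset.image_union, himgP, himgN]
  ext v
  simp only [Finset.mem_union, Finset.mem_Icc, Finset.mem_erase]
  constructor
  · rintro (⟨h1, h2⟩ | ⟨h1, h2⟩) <;> constructor <;> omega
  · rintro ⟨h1, h2, h3⟩
    rcases lt_trichotomy v 0 with h | h | h
    · right; omega
    · exact absurd h h1
    · left; omega


lemma NT_le_one (S : Sys m T cfg site) (s : ℤ) : Nc cfg T s ≤ 1 := by
  apply Finset.card_le_one.mpr
  intro a ha b hb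
  simp only [Finset.mem_filter] at ha hb
  exact S.hcomplete (by rw [ha.2, hb.2])

lemma mem_shape_iff (S : Sys m T cfg site) (s : ℤ) :
    (∃ x : Chips m, cfg T x = s) ↔ (s ≠ 0 ∧ -(m:ℤ) ≤ s ∧ s ≤ m) := by
  have hsh := shape S
  constructor
  · rintro ⟨x, rfl⟩
    have : cfg T x ∈ Finset.image (fun x => cfg T x) Finset.univ :=
      Finset.mem_image_of_mem _ (Finset.mem_univ x)
    rw [hsh] at this
    simp only [Finset.mem_erase, Finset.mem_Icc] at this
    exact ⟨this.1, this.2.1, this.2.2⟩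
  · intro ⟨h1, h2, h3⟩
    have : s ∈ (Finset.Icc (-(m:ℤ)) (m:ℤ)).erase 0 := by
      simp only [Finset.mem_erase, Finset.mem_Icc]; exact ⟨h1, h2, h3⟩
    rw [← hsh] at this
    obtain ⟨x, _, hx⟩ := Finset.mem_image.mp this
    exact ⟨x, hx⟩

lemma NT_zero (S : Sys m T cfg site) : Nc cfg T 0 = 0 := by
  rw [Nc, Finset.card_eq_zero]
  apply Finset.filter_eq_empty_iff.mpr
  intro x _
  intro hx
  have := (mem_shape_iff S 0).mp ⟨x, hx⟩
  exact this.1 rfl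

lemma NT_one (S : Sys m T cfg site) {s : ℤ} (h1 : s ≠ 0) (h2 : -(m:ℤ) ≤ s) (h3 : s ≤ m) :
    Nc cfg T s = 1 := by
  obtain ⟨x, hx⟩ := (mem_shape_iff S s).mpr ⟨h1, h2, h3⟩
  have hle := NT_le_one S s
  have hge : 1 ≤ Nc cfg T s :=
    Finset.card_pos.mpr ⟨x, Finset.mem_filter.mpr ⟨Finset.mem_univ x, hx⟩⟩
  omega

lemma card_gt (S : Sys m T cfg site) {t : ℤ} (ht : 0 ≤ t) :
    ((Finset.univ.filter (fun x : Chips m => t < cfg T x)).card : ℤ) = max ((m:ℤ) - t) 0 := by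
  classical
  have hinj : Set.InjOn (fun x : Chips m => cfg T x)
      ↑(Finset.univ.filter (fun x : Chips m => t < cfg T x)) :=
    fun x _ y _ h => S.hcomplete h
  rw [← Finset.card_image_of_injOn hinj]
  have himg : (Finset.univ.filter (fun x : Chips m => t < cfg T x)).image
      (fun x => cfg T x) = Finset.Icc (t+1) (m:ℤ) := by
    ext v
    simp only [Finset.mem_image, Finset.mem_filter, Finset.mem_univ, true_and, Finset.mem_Icc]
    constructor
    · rintro ⟨x, hx, rfl⟩
      have := (mem_shape_iff S (cfg T x)).mp ⟨x, rfl⟩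
      omega
    · intro hv
      obtain ⟨x, hx⟩ := (mem_shape_iff S v).mpr ⟨by omega, by omega, by omega⟩
      exact ⟨x, by omega, hx⟩
  rw [himg, Int.card_Icc]
  omega

lemma card_lt (S : Sys m T cfg site) {t : ℤ} (ht : t ≤ 0) :
    ((Finset.univ.filter (fun x : Chips m => cfg T x < t)).card : ℤ) = max ((m:ℤ) + t) 0 := by
  classical
  have hinj : Set.InjOn (fun x : Chips m => cfg T x)
      ↑(Finset.univ.filter (fun x : Chips m => cfg T x < t)) :=
    fun x _ y _ h => S.hcomplete h
  rw [← Finset.card_image_of_injOn hinj]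
  have himg : (Finset.univ.filter (fun x : Chips m => cfg T x < t)).image
      (fun x => cfg T x) = Finset.Icc (-(m:ℤ)) (t-1) := by
    ext v
    simp only [Finset.mem_image, Finset.mem_filter, Finset.mem_univ, true_and, Finset.mem_Icc]
    constructor
    · rintro ⟨x, hx, rfl⟩
      have := (mem_shape_iff S (cfg T x)).mp ⟨x, rfl⟩
      omega
    · intro hv
      obtain ⟨x, hx⟩ := (mem_shape_iff S v).mpr ⟨by omega, by omega, by omega⟩
      exact ⟨x, by omega, hx⟩
  rw [himg, Int.card_Icc]
  omega

lemma bF_diff_r (S : Sys m T cfg site) {t : ℤ} (ht : 0 ≤ t) :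
    (bF site T t : ℤ) - (bF site T (t+1) : ℤ) = max ((m:ℤ) - t) 0 := by
  have h1 := Wr S ht T le_rfl
  have h2 := Wr S (show (0:ℤ) ≤ t+1 by omega) T le_rfl
  have h3 : ∀ x : Chips m, max (cfg T x - t) 0 - max (cfg T x - (t+1)) 0
      = if t < cfg T x then 1 else 0 := by
    intro x; split_ifs <;> omega
  have h4 : (∑ x : Chips m, max (cfg T x - t) 0) - (∑ x : Chips m, max (cfg T x - (t+1)) 0)
      = ((Finset.univ.filter (fun x : Chips m => t < cfg T x)).card : ℤ) := by
    rw [← Finset.sum_sub_distrib, Finset.sum_congr rfl (fun x _ => h3 x)]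
    rw [Finset.sum_boole]
  rw [h1, h2] at h4
  rw [card_gt S ht] at h4
  exact h4

lemma bF_diff_l (S : Sys m T cfg site) {t : ℤ} (ht : t ≤ 0) :
    (bF site T t : ℤ) - (bF site T (t-1) : ℤ) = max ((m:ℤ) + t) 0 := by
  have h1 := Wl S ht T le_rfl
  have h2 := Wl S (show t-1 ≤ (0:ℤ) by omega) T le_rfl
  have h3 : ∀ x : Chips m, max (t - cfg T x) 0 - max ((t-1) - cfg T x) 0
      = if cfg T x < t then 1 else 0 := by
    intro x; split_ifs <;> omega
  have h4 : (∑ x : Chips m, max (t - cfg T x) 0) - (∑ x : Chips m, max ((t-1) - cfg T x) 0)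
      = ((Finset.univ.filter (fun x : Chips m => cfg T x < t)).card : ℤ) := by
    rw [← Finset.sum_sub_distrib, Finset.sum_congr rfl (fun x _ => h3 x)]
    rw [Finset.sum_boole]
  rw [h1, h2] at h4
  rw [card_lt S ht] at h4
  exact h4

lemma Ffact_r (S : Sys m T cfg site) : ∀ t : ℤ, 0 ≤ t → (bF site T t : ℤ) = gz ((m:ℤ) - t) := by
  have key : ∀ n : ℕ, n ≤ m → (bF site T ((m:ℤ) - n) : ℤ) = gz (n:ℤ) := by
    intro n
    induction n with
    | zero =>
      intro _
      have hcap := cap S T le_rfl (m:ℤ)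
      have : gz ((m:ℤ) - |(m:ℤ)|) = 0 := by
        rw [abs_of_nonneg (by positivity)]; exact gz_of_nonpos (by omega)
      have hnn : (0:ℤ) ≤ (bF site T (m:ℤ) : ℤ) := Int.natCast_nonneg _
      push_cast
      rw [sub_zero, gz_of_nonpos le_rfl]
      omega
    | succ n ih =>
      intro hn
      have ihv := ih (by omega)
      have hd := bF_diff_r S (t := (m:ℤ) - (n+1)) (by push_cast; omega)
      have he : (m:ℤ) - (n+1) + 1 = (m:ℤ) - n := by push_cast; ring
      rw [he] at hd
      have hmax : max ((m:ℤ) - ((m:ℤ) - ((n:ℤ)+1))) 0 = (n:ℤ)+1 := by omega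
      have hgs := gz_succ (k := (n:ℤ)+1) (by omega)
      rw [show (n:ℤ)+1-1 = (n:ℤ) by ring] at hgs
      push_cast at hd ihv ⊢
      rw [hmax] at hd
      rw [hgs]
      omega
  intro t ht
  rcases le_or_gt t (m:ℤ) with h | h
  · have hn : ((m:ℤ) - t).toNat ≤ m := by omega
    have := key ((m:ℤ) - t).toNat hn
    rw [show ((m:ℤ) - (((m:ℤ) - t).toNat : ℤ)) = t by omega] at this
    rw [this]
    congr 1
    omega
  · have hcap := cap S T le_rfl t
    have : gz ((m:ℤ) - |t|) = 0 := by
      rw [abs_of_nonneg ht]; exact gz_of_nonpos (by omega)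
    have hnn : (0:ℤ) ≤ (bF site T t : ℤ) := Int.natCast_nonneg _
    rw [gz_of_nonpos (by omega)]
    omega

lemma Ffact_l (S : Sys m T cfg site) : ∀ t : ℤ, t ≤ 0 → (bF site T t : ℤ) = gz ((m:ℤ) + t) := by
  have key : ∀ n : ℕ, n ≤ m → (bF site T (-(m:ℤ) + n) : ℤ) = gz (n:ℤ) := by
    intro n
    induction n with
    | zero =>
      intro _
      have hcap := cap S T le_rfl (-(m:ℤ))
      have : gz ((m:ℤ) - |(-(m:ℤ))|) = 0 := by
        rw [abs_neg, abs_of_nonneg (by positivity)]; exact gz_of_nonpos (by omega)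
      have hnn : (0:ℤ) ≤ (bF site T (-(m:ℤ)) : ℤ) := Int.natCast_nonneg _
      push_cast
      rw [add_zero, gz_of_nonpos le_rfl]
      omega
    | succ n ih =>
      intro hn
      have ihv := ih (by omega)
      have hd := bF_diff_l S (t := -(m:ℤ) + (n+1)) (by push_cast; omega)
      have he : -(m:ℤ) + ((n:ℤ)+1) - 1 = -(m:ℤ) + n := by ring
      rw [show -(m:ℤ) + (((n:ℕ):ℤ)+1) - 1 = -(m:ℤ) + ((n:ℕ):ℤ) by ring] at hd
      have hmax : max ((m:ℤ) + (-(m:ℤ) + ((n:ℤ)+1))) 0 = (n:ℤ)+1 := by omega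
      have hgs := gz_succ (k := (n:ℤ)+1) (by omega)
      rw [show (n:ℤ)+1-1 = (n:ℤ) by ring] at hgs
      push_cast at hd ihv ⊢
      rw [hmax] at hd
      rw [hgs]
      omega
  intro t ht
  rcases le_or_gt (-(m:ℤ)) t with h | h
  · have hn : ((m:ℤ) + t).toNat ≤ m := by omega
    have := key ((m:ℤ) + t).toNat hn
    rw [show (-(m:ℤ) + (((m:ℤ) + t).toNat : ℤ)) = t by omega] at this
    rw [this]
    congr 1
    omega
  · have hcap := cap S T le_rfl t
    have : gz ((m:ℤ) - |t|) = 0 := by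
      rw [abs_of_nonpos (by omega)]; exact gz_of_nonpos (by omega)
    have hnn : (0:ℤ) ≤ (bF site T t : ℤ) := Int.natCast_nonneg _
    rw [gz_of_nonpos (by omega)]
    omega

lemma rF_zero (t : ℤ) : rF site T 0 t = bF site T t := by
  unfold rF bF
  rw [Finset.range_eq_Ico]

lemma rF_le_cap (S : Sys m T cfg site) (u : ℕ) (t : ℤ) :
    (rF site T u t : ℤ) ≤ gz ((m:ℤ) - |t|) := by
  have h1 : rF site T u t ≤ rF site T 0 t := rF_antitone (Nat.zero_le u) t
  rw [rF_zero] at h1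
  have h2 := cap S T le_rfl t
  omega


lemma gz_band (k j : ℤ) (hj : 1 ≤ j) : gz k - gz (k-j) - j ≤ gz (k-1) - gz (k-1-j) := by
  rcases le_or_gt 1 (k-j) with h | h
  · have h1 := gz_succ (k := k) (by omega)
    have h2 := gz_succ (k := k-j) h
    rw [show k-j-1 = k-1-j by ring] at h2
    omega
  · have h2 : gz (k-j) = 0 := gz_of_nonpos (by omega)
    have h3 : gz (k-1-j) = 0 := gz_of_nonpos (by omega)
    rcases le_or_gt 1 k with h4 | h4
    · have h1 := gz_succ (k := k) h4
      have := gz_nonneg (k-1)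
      omega
    · have h5 : gz k = 0 := gz_of_nonpos (by omega)
      have := gz_nonneg (k-1)
      have h6 := gz_nonneg (k-1-j)
      omega

lemma rF0_val (S : Sys m T cfg site) (t : ℤ) : (rF site T 0 t : ℤ) = gz ((m:ℤ) - |t|) := by
  rw [rF_zero]
  rcases le_or_gt 0 t with h | h
  · rw [abs_of_nonneg h]; exact Ffact_r S t h
  · rw [abs_of_nonpos (by omega)]
    rw [show (m:ℤ) - -t = (m:ℤ) + t by ring]
    exact Ffact_l S t (by omega)

lemma inv_all (S : Sys m T cfg site) : ∀ u, u ≤ T → ∀ t j : ℤ, 0 ≤ t → 1 ≤ j →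
    ((rF site T u t : ℤ) ≤ gz ((m:ℤ)-t) - gz ((m:ℤ)-t-j) →
      (rF site T u t : ℤ) - (rF site T u (t+1) : ℤ) ≤ j) ∧
    ((rF site T u (-t) : ℤ) ≤ gz ((m:ℤ)-t) - gz ((m:ℤ)-t-j) →
      (rF site T u (-t) : ℤ) - (rF site T u (-t-1) : ℤ) ≤ j) ∧
    (1 ≤ t → (rF site T u t : ℤ) ≤ gz (m:ℤ) - gz ((m:ℤ)-j) →
      (rF site T u t : ℤ) - j + 1 ≤ (rF site T u (t-1) : ℤ)) ∧
    (1 ≤ t → (rF site T u (-t) : ℤ) ≤ gz (m:ℤ) - gz ((m:ℤ)-j) →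
      (rF site T u (-t) : ℤ) - j + 1 ≤ (rF site T u (-t+1) : ℤ)) := by
  intro u
  induction u with
  | zero =>
    intro _ t j ht hj
    have v0 := rF0_val S t
    have v1 := rF0_val S (t+1)
    have v2 := rF0_val S (-t)
    have v3 := rF0_val S (-t-1)
    have v4 := rF0_val S (t-1)
    have v5 := rF0_val S (-t+1)
    rw [abs_of_nonneg ht] at v0
    rw [abs_of_nonneg (by omega : (0:ℤ) ≤ t+1), show (m:ℤ) - (t+1) = (m:ℤ)-t-1 by ring] at v1
    rw [abs_of_nonpos (by omega : -t ≤ (0:ℤ)), neg_neg] at v2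
    rw [abs_of_nonpos (by omega : -t-1 ≤ (0:ℤ)),
      show (m:ℤ) - -(-t-1) = (m:ℤ)-t-1 by ring] at v3
    refine ⟨?_, ?_, ?_, ?_⟩
    · intro hcond
      rw [v0] at hcond ⊢
      rw [v1]
      have h0 := gz_nonneg ((m:ℤ)-t-j)
      have h1 : gz ((m:ℤ)-t-j) = 0 := by omega
      have h2 : (m:ℤ)-t-j ≤ 0 := by
        by_contra hc
        have := gz_pos (k := (m:ℤ)-t-j) (by omega)
        omega
      rcases le_or_gt 1 ((m:ℤ)-t) with h3 | h3
      · have := gz_succ (k := (m:ℤ)-t) h3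
        omega
      · have h4 : gz ((m:ℤ)-t) = 0 := gz_of_nonpos (by omega)
        have := gz_nonneg ((m:ℤ)-t-1)
        omega
    · intro hcond
      rw [v2] at hcond ⊢
      rw [v3]
      have h0 := gz_nonneg ((m:ℤ)-t-j)
      have h1 : gz ((m:ℤ)-t-j) = 0 := by omega
      have h2 : (m:ℤ)-t-j ≤ 0 := by
        by_contra hc
        have := gz_pos (k := (m:ℤ)-t-j) (by omega)
        omega
      rcases le_or_gt 1 ((m:ℤ)-t) with h3 | h3
      · have := gz_succ (k := (m:ℤ)-t) h3
        omega
      · have h4 : gz ((m:ℤ)-t) = 0 := gz_of_nonpos (by omega)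
        have := gz_nonneg ((m:ℤ)-t-1)
        omega
    · intro ht1 _
      rw [v0, v4]
      rw [abs_of_nonneg (by omega : (0:ℤ) ≤ t-1)]
      have : gz ((m:ℤ)-t) ≤ gz ((m:ℤ)-(t-1)) := gz_mono (by omega)
      omega
    · intro ht1 _
      rw [v2, v5]
      rw [abs_of_nonpos (by omega : -t+1 ≤ (0:ℤ)),
        show (m:ℤ) - -(-t+1) = (m:ℤ)-(t-1) by ring]
      have : gz ((m:ℤ)-t) ≤ gz ((m:ℤ)-(t-1)) := gz_mono (by omega)
      omega
  | succ u ihu =>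
    intro hu t j ht hj
    have hu' : u < T := by omega
    have ih := ihu (by omega)
    have hNT1 := NT_le_one S
    have hNT0 := NT_zero S
    have htwo := two_at S hu'
    refine ⟨?_, ?_, ?_, ?_⟩
    · -- A1
      intro hcond
      have e0 := rF_succ (site := site) hu' t
      have e1 := rF_succ (site := site) hu' (t+1)
      by_cases h1 : site u = t
      · rw [if_pos h1] at e0
        rw [if_neg (by omega : site u ≠ t+1)] at e1
        by_cases h2 : (rF site T u t : ℤ) ≤ gz ((m:ℤ)-t) - gz ((m:ℤ)-t-j)
        · have := (ih t j ht hj).1 h2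
          omega
        · rcases le_or_gt 1 ((m:ℤ) - t - j) with hk | hk
          · have hth := gz_succ (k := (m:ℤ)-t-j) hk
            have hcond2 : (rF site T u t : ℤ) ≤ gz ((m:ℤ)-t) - gz ((m:ℤ)-t-(j+1)) := by
              rw [show (m:ℤ)-t-(j+1) = (m:ℤ)-t-j-1 by ring]
              omega
            have := (ih t (j+1) ht (by omega)).1 hcond2
            omega
          · exfalso
            have hcap := rF_le_cap S u t
            rw [abs_of_nonneg ht] at hcap
            have hz0 : gz ((m:ℤ)-t-j) = 0 := gz_of_nonpos (by omega)
            omega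
      · rw [if_neg h1] at e0
        by_cases h2 : site u = t+1
        · rw [if_pos h2] at e1
          have hcondu : (rF site T u t : ℤ) ≤ gz ((m:ℤ)-t) - gz ((m:ℤ)-t-j) := by omega
          have h3 := (ih t j ht hj).1 hcondu
          rcases le_or_gt ((rF site T u t : ℤ) - rF site T u (t+1)) (j-1) with hle | hgt
          · omega
          · exfalso
            have heq : (rF site T u t : ℤ) - rF site T u (t+1) = j := by omega
            rw [h2] at htwo
            have hNid := ID1 S (le_of_lt hu') (t+1)
            rw [show t+1-1 = t by ring] at hNid
            have hband := gz_band ((m:ℤ)-t) j hj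
            rw [show (m:ℤ)-t-1 = (m:ℤ)-(t+1) by ring,
              show (m:ℤ)-(t+1)-j = (m:ℤ)-(t+1)-j by ring] at hband
            have hcond3 : (rF site T u (t+1) : ℤ)
                ≤ gz ((m:ℤ)-(t+1)) - gz ((m:ℤ)-(t+1)-j) := by omega
            have h5 := (ih (t+1) j (by omega) hj).1 hcond3
            have hNT := hNT1 (t+1)
            omega
        · rw [if_neg h2] at e1
          have hcondu : (rF site T u t : ℤ) ≤ gz ((m:ℤ)-t) - gz ((m:ℤ)-t-j) := by omega
          have := (ih t j ht hj).1 hcondu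
          omega
    · -- A2
      intro hcond
      have e0 := rF_succ (site := site) hu' (-t)
      have e1 := rF_succ (site := site) hu' (-t-1)
      by_cases h1 : site u = -t
      · rw [if_pos h1] at e0
        rw [if_neg (by omega : site u ≠ -t-1)] at e1
        by_cases h2 : (rF site T u (-t) : ℤ) ≤ gz ((m:ℤ)-t) - gz ((m:ℤ)-t-j)
        · have := (ih t j ht hj).2.1 h2
          omega
        · rcases le_or_gt 1 ((m:ℤ) - t - j) with hk | hk
          · have hth := gz_succ (k := (m:ℤ)-t-j) hk
            have hcond2 : (rF site T u (-t) : ℤ) ≤ gz ((m:ℤ)-t) - gz ((m:ℤ)-t-(j+1)) := by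
              rw [show (m:ℤ)-t-(j+1) = (m:ℤ)-t-j-1 by ring]
              omega
            have := (ih t (j+1) ht (by omega)).2.1 hcond2
            omega
          · exfalso
            have hcap := rF_le_cap S u (-t)
            rw [abs_of_nonpos (by omega : -t ≤ (0:ℤ)), neg_neg] at hcap
            have hz0 : gz ((m:ℤ)-t-j) = 0 := gz_of_nonpos (by omega)
            omega
      · rw [if_neg h1] at e0
        by_cases h2 : site u = -t-1
        · rw [if_pos h2] at e1
          have hcondu : (rF site T u (-t) : ℤ) ≤ gz ((m:ℤ)-t) - gz ((m:ℤ)-t-j) := by omega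
          have h3 := (ih t j ht hj).2.1 hcondu
          rcases le_or_gt ((rF site T u (-t) : ℤ) - rF site T u (-t-1)) (j-1) with hle | hgt
          · omega
          · exfalso
            have heq : (rF site T u (-t) : ℤ) - rF site T u (-t-1) = j := by omega
            rw [h2] at htwo
            have hNid := ID1 S (le_of_lt hu') (-t-1)
            rw [show -t-1+1 = -t by ring] at hNid
            have hband := gz_band ((m:ℤ)-t) j hj
            rw [show (m:ℤ)-t-1 = (m:ℤ)-(t+1) by ring] at hband
            have hcond3 : (rF site T u (-(t+1)) : ℤ)
                ≤ gz ((m:ℤ)-(t+1)) - gz ((m:ℤ)-(t+1)-j) := by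
              rw [show -(t+1) = -t-1 by ring]
              omega
            have h5 := (ih (t+1) j (by omega) hj).2.1 hcond3
            rw [show -(t+1) = -t-1 by ring] at h5
            have hNT := hNT1 (-t-1)
            omega
        · rw [if_neg h2] at e1
          have hcondu : (rF site T u (-t) : ℤ) ≤ gz ((m:ℤ)-t) - gz ((m:ℤ)-t-j) := by omega
          have := (ih t j ht hj).2.1 hcondu
          omega
    · -- B1
      intro ht1 hcond
      have e0 := rF_succ (site := site) hu' t
      have e1 := rF_succ (site := site) hu' (t-1)
      by_cases h1 : site u = t-1
      · rw [if_pos h1] at e1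
        rw [if_neg (by omega : site u ≠ t)] at e0
        have hB := (ih t j ht hj).2.2.1 ht1 (by omega)
        rcases le_or_gt ((rF site T u t : ℤ) - j + 1) ((rF site T u (t-1) : ℤ) - 1) with hle | hgt
        · omega
        · exfalso
          have heq : (rF site T u (t-1) : ℤ) = (rF site T u t : ℤ) - j + 1 := by omega
          rw [h1] at htwo
          have hNid := ID1 S (le_of_lt hu') (t-1)
          rw [show t-1+1 = t by ring] at hNid
          rcases le_or_gt 2 t with ht2 | ht2
          · have hB2 := (ih (t-1) j (by omega) hj).2.2.1 (by omega) (by omega)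
            have hNT := hNT1 (t-1)
            omega
          · have ht1e : t = 1 := by omega
            subst ht1e
            rw [show (1:ℤ)-1 = 0 by ring] at hNid heq htwo
            rw [show (0:ℤ)-1 = -1 by ring] at hNid
            have hA2 := (ih 0 j le_rfl hj).2.1
            rw [neg_zero, zero_sub, sub_zero] at hA2
            have hcond4 : (rF site T u 0 : ℤ) ≤ gz (m:ℤ) - gz ((m:ℤ)-j) := by omega
            have h6 := hA2 hcond4
            omega
      · rw [if_neg h1] at e1
        by_cases h2 : site u = t
        · rw [if_pos h2] at e0
          by_cases h3 : (rF site T u t : ℤ) ≤ gz (m:ℤ) - gz ((m:ℤ)-j)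
          · have := (ih t j ht hj).2.2.1 ht1 h3
            omega
          · rcases le_or_gt 1 ((m:ℤ) - j) with hk | hk
            · have hth := gz_succ (k := (m:ℤ)-j) hk
              have hcond2 : (rF site T u t : ℤ) ≤ gz (m:ℤ) - gz ((m:ℤ)-(j+1)) := by
                rw [show (m:ℤ)-(j+1) = (m:ℤ)-j-1 by ring]
                omega
              have := (ih t (j+1) ht (by omega)).2.2.1 ht1 hcond2
              omega
            · exfalso
              have hcap := rF_le_cap S u t
              rw [abs_of_nonneg ht] at hcap
              have hmono : gz ((m:ℤ)-t) ≤ gz (m:ℤ) := gz_mono (by omega)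
              have hz0 : gz ((m:ℤ)-j) = 0 := gz_of_nonpos (by omega)
              omega
        · rw [if_neg h2] at e0
          have := (ih t j ht hj).2.2.1 ht1 (by omega)
          omega
    · -- B2
      intro ht1 hcond
      have e0 := rF_succ (site := site) hu' (-t)
      have e1 := rF_succ (site := site) hu' (-t+1)
      by_cases h1 : site u = -t+1
      · rw [if_pos h1] at e1
        rw [if_neg (by omega : site u ≠ -t)] at e0
        have hB := (ih t j ht hj).2.2.2 ht1 (by omega)
        rcases le_or_gt ((rF site T u (-t) : ℤ) - j + 1) ((rF site T u (-t+1) : ℤ) - 1)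
          with hle | hgt
        · omega
        · exfalso
          have heq : (rF site T u (-t+1) : ℤ) = (rF site T u (-t) : ℤ) - j + 1 := by omega
          rw [h1] at htwo
          have hNid := ID1 S (le_of_lt hu') (-t+1)
          rw [show -t+1-1 = -t by ring] at hNid
          rcases le_or_gt 2 t with ht2 | ht2
          · have hB2 := (ih (t-1) j (by omega) hj).2.2.2 (by omega) ?hcc
            case hcc =>
              rw [show -(t-1) = -t+1 by ring]
              omega
            rw [show -(t-1) = -t+1 by ring] at hB2
            have hNT := hNT1 (-t+1)
            omega
          · have ht1e : t = 1 := by omega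
            subst ht1e
            rw [show -(1:ℤ)+1 = 0 by ring] at hNid heq htwo
            rw [show (0:ℤ)+1 = 1 by ring] at hNid
            have hA1 := (ih 0 j le_rfl hj).1
            rw [sub_zero, zero_add] at hA1
            have hcond4 : (rF site T u 0 : ℤ) ≤ gz (m:ℤ) - gz ((m:ℤ)-j) := by omega
            have h6 := hA1 hcond4
            omega
      · rw [if_neg h1] at e1
        by_cases h2 : site u = -t
        · rw [if_pos h2] at e0
          by_cases h3 : (rF site T u (-t) : ℤ) ≤ gz (m:ℤ) - gz ((m:ℤ)-j)
          · have := (ih t j ht hj).2.2.2 ht1 h3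
            omega
          · rcases le_or_gt 1 ((m:ℤ) - j) with hk | hk
            · have hth := gz_succ (k := (m:ℤ)-j) hk
              have hcond2 : (rF site T u (-t) : ℤ) ≤ gz (m:ℤ) - gz ((m:ℤ)-(j+1)) := by
                rw [show (m:ℤ)-(j+1) = (m:ℤ)-j-1 by ring]
                omega
              have := (ih t (j+1) ht (by omega)).2.2.2 ht1 hcond2
              omega
            · exfalso
              have hcap := rF_le_cap S u (-t)
              rw [abs_of_nonpos (by omega : -t ≤ (0:ℤ)), neg_neg] at hcap
              have hmono : gz ((m:ℤ)-t) ≤ gz (m:ℤ) := gz_mono (by omega)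
              have hz0 : gz ((m:ℤ)-j) = 0 := gz_of_nonpos (by omega)
              omega
        · rw [if_neg h2] at e0
          have := (ih t j ht hj).2.2.2 ht1 (by omega)
          omega


lemma jth_rF {sz : ℤ} {jj v : ℕ} (h : JthLastFiring site T sz jj v) (hjj : 1 ≤ jj) :
    rF site T v sz = jj := by
  obtain ⟨hvT, hsv, hc⟩ := h
  have e := rF_succ (site := site) hvT sz
  rw [if_pos hsv] at e
  have h2 : rF site T (v+1) sz = jj - 1 := hc
  omega

end CFAux

/-- Grid-structure lemma: in any complete labeled chip-firing sequence with `2m`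
chips (labeled `-m, …, -1, 1, …, m`) starting at the origin, for `0 ≤ x, y ≤ m-1`,
firing move `(x, y)` (the `(min x y + 1)`-th-from-last firing at site `x - y`)
occurs with exactly 2 chips present at site `x - y`, and it occurs after the
firing moves `(x+1, y)` and `(x, y+1)` whenever those exist. -/
theorem stmt0 (m : ℕ) (hm : 1 ≤ m) (T : ℕ)
    (cfg : ℕ → Chips m → ℤ) (site : ℕ → ℤ)
    (hinit : ∀ a, cfg 0 a = 0)
    (hstep : ∀ u < T, LMove (fun a => a.1) (cfg u) (cfg (u + 1)) (site u))
    (hcomplete : Function.Injective (cfg T)) :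
    ∀ x y : ℕ, x ≤ m - 1 → y ≤ m - 1 →
      ∀ u, JthLastFiring site T ((x : ℤ) - (y : ℤ)) (min x y + 1) u →
        ((Finset.univ.filter (fun a : Chips m => cfg u a = (x : ℤ) - (y : ℤ))).card = 2) ∧
        (∀ v, JthLastFiring site T (((x : ℤ) + 1) - (y : ℤ)) (min (x + 1) y + 1) v → v < u) ∧
        (∀ v, JthLastFiring site T ((x : ℤ) - ((y : ℤ) + 1)) (min x (y + 1) + 1) v → v < u) := by
  classical
  intro x y hx hy u hJ
  have S : CFAux.Sys m T cfg site := ⟨hm, hinit, hstep, hcomplete⟩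
  have huT := hJ.1
  have hsu := hJ.2.1
  have hrfu : CFAux.rF site T u ((x:ℤ) - y) = min x y + 1 := CFAux.jth_rF hJ (by omega)
  have hxm : x + 1 ≤ m := by omega
  have hym : y + 1 ≤ m := by omega
  have inv := CFAux.inv_all S u (le_of_lt huT)
  have hNid := CFAux.ID1 S (le_of_lt huT) ((x:ℤ) - y)
  have htwo := CFAux.two_at S huT
  rw [hsu] at htwo
  have hgm : CFAux.gz (m:ℤ) = CFAux.gz ((m:ℤ)-1) + m := CFAux.gz_succ (by exact_mod_cast hm)
  rcases lt_trichotomy x y with hxy | hxy | hxy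
  · -- x < y : site s = x - y ≤ -1
    have hmin : min x y = x := by omega
    rw [hmin] at hrfu
    have hneg : (x:ℤ) - y = -((y:ℤ) - x) := by ring
    have ht0 : (1:ℤ) ≤ (y:ℤ) - x := by omega
    have hgk : CFAux.gz ((m:ℤ) - ((y:ℤ)-x))
        = CFAux.gz ((m:ℤ) - ((y:ℤ)-x) - 1) + ((m:ℤ) - ((y:ℤ)-x)) :=
      CFAux.gz_succ (by omega)
    have hA2 := (inv ((y:ℤ)-x) 1 (by omega) le_rfl).2.1
    rw [← hneg] at hA2
    have hA2' := hA2 (by omega)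
    have hB2 := (inv ((y:ℤ)-x) 1 (by omega) le_rfl).2.2.2 ht0
    rw [← hneg] at hB2
    have hB2' := hB2 (by omega)
    have hNT := CFAux.NT_one S (s := (x:ℤ)-y) (by omega) (by omega) (by omega)
    have hEq : (CFAux.Nc cfg u ((x:ℤ)-y) : ℤ) = 2
        ∧ (CFAux.rF site T u ((x:ℤ)-y-1) : ℤ) = x
        ∧ (CFAux.rF site T u ((x:ℤ)-y+1) : ℤ) = x + 1 := by
      refine ⟨by omega, by omega, by omega⟩
    refine ⟨by exact_mod_cast hEq.1, ?_, ?_⟩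
    · intro v hJv
      have hminv : min (x+1) y = x+1 := by omega
      rw [hminv] at hJv
      have hrv : CFAux.rF site T v (((x:ℤ)+1) - y) = (x+1) + 1 := CFAux.jth_rF hJv (by omega)
      rw [show ((x:ℤ)+1) - y = (x:ℤ)-y+1 by ring] at hrv
      by_contra hc
      have hmon := CFAux.rF_antitone (site := site) (T := T) (show u ≤ v by omega) ((x:ℤ)-y+1)
      omega
    · intro v hJv
      have hminv : min x (y+1) = x := by omega
      rw [hminv] at hJv
      have hrv : CFAux.rF site T v ((x:ℤ) - ((y:ℤ)+1)) = x + 1 := CFAux.jth_rF hJv (by omega)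
      rw [show (x:ℤ) - ((y:ℤ)+1) = (x:ℤ)-y-1 by ring] at hrv
      by_contra hc
      have hmon := CFAux.rF_antitone (site := site) (T := T) (show u ≤ v by omega) ((x:ℤ)-y-1)
      omega
  · -- x = y : site 0
    subst hxy
    have hmin : min x x = x := by omega
    rw [hmin] at hrfu
    have hs0 : (x:ℤ) - x = 0 := by ring
    rw [hs0] at hrfu hNid hsu htwo
    rw [zero_sub, zero_add] at hNid
    have hNT0 := CFAux.NT_zero S
    have hA1 := (inv 0 1 le_rfl le_rfl).1
    rw [sub_zero, zero_add] at hA1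
    have hA1' := hA1 (by omega)
    have hA2 := (inv 0 1 le_rfl le_rfl).2.1
    rw [neg_zero, zero_sub, sub_zero] at hA2
    have hA2' := hA2 (by omega)
    have hEq : (CFAux.Nc cfg u 0 : ℤ) = 2
        ∧ (CFAux.rF site T u (-1) : ℤ) = x
        ∧ (CFAux.rF site T u 1 : ℤ) = x := by
      refine ⟨by omega, by omega, by omega⟩
    refine ⟨?_, ?_, ?_⟩
    · have : (CFAux.Nc cfg u ((x:ℤ) - x) : ℤ) = 2 := by rw [hs0]; exact hEq.1
      exact_mod_cast this
    · intro v hJv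
      have hminv : min (x+1) x = x := by omega
      rw [hminv] at hJv
      have hrv : CFAux.rF site T v (((x:ℤ)+1) - x) = x + 1 := CFAux.jth_rF hJv (by omega)
      rw [show ((x:ℤ)+1) - x = 1 by ring] at hrv
      by_contra hc
      have hmon := CFAux.rF_antitone (site := site) (T := T) (show u ≤ v by omega) (1:ℤ)
      omega
    · intro v hJv
      have hminv : min x (x+1) = x := by omega
      rw [hminv] at hJv
      have hrv : CFAux.rF site T v ((x:ℤ) - ((x:ℤ)+1)) = x + 1 := CFAux.jth_rF hJv (by omega)
      rw [show (x:ℤ) - ((x:ℤ)+1) = -1 by ring] at hrv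
      by_contra hc
      have hmon := CFAux.rF_antitone (site := site) (T := T) (show u ≤ v by omega) (-1:ℤ)
      omega
  · -- y < x : site s = x - y ≥ 1
    have hmin : min x y = y := by omega
    rw [hmin] at hrfu
    have hs1 : (1:ℤ) ≤ (x:ℤ) - y := by omega
    have hgk : CFAux.gz ((m:ℤ) - ((x:ℤ)-y))
        = CFAux.gz ((m:ℤ) - ((x:ℤ)-y) - 1) + ((m:ℤ) - ((x:ℤ)-y)) :=
      CFAux.gz_succ (by omega)
    have hA1 := (inv ((x:ℤ)-y) 1 (by omega) le_rfl).1
    have hA1' := hA1 (by omega)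
    have hB1 := (inv ((x:ℤ)-y) 1 (by omega) le_rfl).2.2.1 hs1
    have hB1' := hB1 (by omega)
    have hNT := CFAux.NT_one S (s := (x:ℤ)-y) (by omega) (by omega) (by omega)
    have hEq : (CFAux.Nc cfg u ((x:ℤ)-y) : ℤ) = 2
        ∧ (CFAux.rF site T u ((x:ℤ)-y-1) : ℤ) = y + 1
        ∧ (CFAux.rF site T u ((x:ℤ)-y+1) : ℤ) = y := by
      refine ⟨by omega, by omega, by omega⟩
    refine ⟨by exact_mod_cast hEq.1, ?_, ?_⟩
    · intro v hJv
      have hminv : min (x+1) y = y := by omega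
      rw [hminv] at hJv
      have hrv : CFAux.rF site T v (((x:ℤ)+1) - y) = y + 1 := CFAux.jth_rF hJv (by omega)
      rw [show ((x:ℤ)+1) - y = (x:ℤ)-y+1 by ring] at hrv
      by_contra hc
      have hmon := CFAux.rF_antitone (site := site) (T := T) (show u ≤ v by omega) ((x:ℤ)-y+1)
      omega
    · intro v hJv
      have hminv : min x (y+1) = y+1 := by omega
      rw [hminv] at hJv
      have hrv : CFAux.rF site T v ((x:ℤ) - ((y:ℤ)+1)) = (y+1) + 1 := CFAux.jth_rF hJv (by omega)
      rw [show (x:ℤ) - ((y:ℤ)+1) = (x:ℤ)-y-1 by ring] at hrv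
      by_contra hc
      have hmon := CFAux.rF_antitone (site := site) (T := T) (show u ≤ v by omega) ((x:ℤ)-y-1)
      omega
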